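/- arXiv:1811.12138 — 3 statements merged into one kernel-verified Lean document; each statement's English description precedes it below -/
import Mathlib

section
/- Let G be a simple graph on n ≥ 1 vertices with m edges. Then EE(G) ≥ e^{2m/n} + n − 1 − 2m/n, with equality if and only if G is the empty graph on n vertices (no edges). -/
/-- The adjacency matrix of a simple graph over `ℝ` is Hermitian. -/
theorem adjHerm {n : ℕ} (G : SimpleGraph (Fin n)) [DecidableRel G.Adj] :
    (G.adjMatrix ℝ).IsHermitian := by
  rw [Matrix.IsHermitian, Matrix.conjTranspose_eq_transpose_of_trivial]
  exact G.isSymm_adjMatrix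

/-- The (real) eigenvalues of the adjacency matrix of `G`. -/
noncomputable def graphEigs {n : ℕ} (G : SimpleGraph (Fin n)) [DecidableRel G.Adj] :
    Fin n → ℝ := (adjHerm G).eigenvalues

/-- The Estrada index `EE(G) = ∑ i, exp (λ i)`. -/
noncomputable def estradaIndex {n : ℕ} (G : SimpleGraph (Fin n)) [DecidableRel G.Adj] : ℝ :=
  ∑ i, Real.exp (graphEigs G i)

open Matrix Finset Real
-- sum of eigenvalues is zero
lemma sum_graphEigs {n : ℕ} (G : SimpleGraph (Fin n)) [DecidableRel G.Adj] :
    ∑ i, graphEigs G i = 0 := by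
  have hA := adjHerm G
  have h := hA.spectral_theorem
  have ht : (G.adjMatrix ℝ).trace = 0 := by simp
  have : (G.adjMatrix ℝ).trace =
      (Matrix.diagonal (RCLike.ofReal ∘ hA.eigenvalues) : Matrix (Fin n) (Fin n) ℝ).trace := by
    conv_lhs => rw [h]
    rw [Unitary.conjStarAlgAut_apply, Matrix.trace_mul_cycle,
      (Matrix.mem_unitaryGroup_iff').mp (hA.eigenvectorUnitary).2, Matrix.one_mul]
  rw [ht, Matrix.trace_diagonal] at this
  simpa [graphEigs, Function.comp] using this.symm

-- Rayleigh bound: 2m ≤ λmax * n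
lemma rayleigh {n : ℕ} (G : SimpleGraph (Fin n)) [DecidableRel G.Adj] {j : Fin n}
    (hj : ∀ i, graphEigs G i ≤ graphEigs G j) :
    2 * (G.edgeFinset.card : ℝ) ≤ graphEigs G j * n := by
  classical
  have hA := adjHerm G
  set U : Matrix (Fin n) (Fin n) ℝ := (hA.eigenvectorUnitary : Matrix (Fin n) (Fin n) ℝ) with hU
  set v : Fin n → ℝ := fun _ => 1 with hv
  set w : Fin n → ℝ := v ᵥ* U with hw
  have hstar : star U = Uᵀ := by
    rw [Matrix.star_eq_conjTranspose, Matrix.conjTranspose_eq_transpose_of_trivial]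
  have key : v ⬝ᵥ (G.adjMatrix ℝ *ᵥ v) = ∑ i, graphEigs G i * (w i * w i) := by
    conv_lhs => rw [hA.spectral_theorem]
    rw [Unitary.conjStarAlgAut_apply, ← Matrix.mulVec_mulVec, ← Matrix.mulVec_mulVec, Matrix.dotProduct_mulVec, hstar,
      Matrix.mulVec_transpose]
    simp only [dotProduct, Matrix.mulVec_diagonal, ← hw, Function.comp_apply,
      RCLike.ofReal_real_eq_id, id_eq]
    exact Finset.sum_congr rfl fun i _ => by rw [graphEigs]; ring
  have hnorm : ∑ i, w i * w i = (n : ℝ) := by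
    have h1 : ∑ i, w i * w i = w ⬝ᵥ (Uᵀ *ᵥ v) := by
      rw [Matrix.mulVec_transpose, ← hw, dotProduct]
    rw [h1, hw, ← Matrix.dotProduct_mulVec, ← hstar, Matrix.mulVec_mulVec,
      (Matrix.mem_unitaryGroup_iff).mp (hA.eigenvectorUnitary).2, Matrix.one_mulVec]
    simp [hv, dotProduct]
  have hlhs : v ⬝ᵥ (G.adjMatrix ℝ *ᵥ v) = 2 * (G.edgeFinset.card : ℝ) := by
    have : ∀ i, (G.adjMatrix ℝ *ᵥ v) i = (G.degree i : ℝ) := by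
      intro i
      have := SimpleGraph.adjMatrix_mulVec_const_apply (G := G) (α := ℝ) (a := 1) (v := i)
      simpa [hv, Function.const] using this
    rw [dotProduct]
    simp only [this]
    simp only [hv, one_mul]
    rw [← Nat.cast_sum]
    rw [SimpleGraph.sum_degrees_eq_twice_card_edges]
    push_cast
    ring
  have hle : ∑ i, graphEigs G i * (w i * w i) ≤ ∑ i, graphEigs G j * (w i * w i) :=
    Finset.sum_le_sum fun i _ => mul_le_mul_of_nonneg_right (hj i) (mul_self_nonneg _)
  calc 2 * (G.edgeFinset.card : ℝ) = ∑ i, graphEigs G i * (w i * w i) := by rw [← key, hlhs]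
    _ ≤ ∑ i, graphEigs G j * (w i * w i) := hle
    _ = graphEigs G j * n := by rw [← Finset.mul_sum, hnorm]

lemma exp_sub_mono {a b : ℝ} (ha : 0 ≤ a) (hab : a ≤ b) :
    Real.exp a - a ≤ Real.exp b - b := by
  have hb : Real.exp b = Real.exp a * Real.exp (b - a) := by
    rw [← Real.exp_add]; ring_nf
  nlinarith [Real.add_one_le_exp (b - a), Real.one_le_exp ha, hb]

lemma graphEigs_bot {n : ℕ} (G : SimpleGraph (Fin n)) [DecidableRel G.Adj] (hG : G = ⊥)
    (i : Fin n) : graphEigs G i = 0 := by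
  have hA0 : G.adjMatrix ℝ = 0 := by
    ext a b
    simp [SimpleGraph.adjMatrix_apply, hG]
  rw [graphEigs, (adjHerm G).eigenvalues_eq]
  simp [hA0]

/-- For a simple graph on `n ≥ 1` vertices with `m` edges,
`EE(G) ≥ e^{2m/n} + n − 1 − 2m/n`, with equality iff `G` is the empty graph. -/
theorem estrada_ge_exp_two_m_div_n {n : ℕ} (hn : 1 ≤ n)
    (G : SimpleGraph (Fin n)) [DecidableRel G.Adj] :
    estradaIndex G ≥
      Real.exp (2 * (G.edgeFinset.card : ℝ) / n) + (n : ℝ) - 1 -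
        2 * (G.edgeFinset.card : ℝ) / n ∧
    (estradaIndex G =
      Real.exp (2 * (G.edgeFinset.card : ℝ) / n) + (n : ℝ) - 1 -
        2 * (G.edgeFinset.card : ℝ) / n ↔ G = ⊥) := by
  classical
  have hn0 : (0 : ℝ) < n := by exact_mod_cast hn
  set t : ℝ := 2 * (G.edgeFinset.card : ℝ) / n with htdef
  have ht0 : 0 ≤ t := by positivity
  -- choose maximal eigenvalue
  obtain ⟨j, -, hj⟩ := Finset.exists_max_image (Finset.univ : Finset (Fin n)) (graphEigs G)
    ⟨⟨0, hn⟩, Finset.mem_univ _⟩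
  have hj' : ∀ i, graphEigs G i ≤ graphEigs G j := fun i => hj i (Finset.mem_univ i)
  have hray : t ≤ graphEigs G j := by
    rw [htdef, div_le_iff₀ hn0]
    exact rayleigh G hj'
  have hsum : ∑ i, graphEigs G i = 0 := sum_graphEigs G
  have hsplit : estradaIndex G =
      Real.exp (graphEigs G j) + ∑ i ∈ Finset.univ.erase j, Real.exp (graphEigs G i) := by
    rw [estradaIndex, ← Finset.add_sum_erase _ _ (Finset.mem_univ j)]
  have hsumerase : ∑ i ∈ Finset.univ.erase j, graphEigs G i = -graphEigs G j := by
    have := Finset.add_sum_erase Finset.univ (graphEigs G) (Finset.mem_univ j)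
    linarith [hsum, this.symm]
  have hcard : (Finset.univ.erase j).card = n - 1 := by
    rw [Finset.card_erase_of_mem (Finset.mem_univ j), Finset.card_univ, Fintype.card_fin]
  have hcardR : ((Finset.univ.erase j).card : ℝ) = (n : ℝ) - 1 := by
    rw [hcard]; rw [Nat.cast_sub hn]; norm_num
  have hstep1 : ∑ i ∈ Finset.univ.erase j, (1 + graphEigs G i) ≤
      ∑ i ∈ Finset.univ.erase j, Real.exp (graphEigs G i) :=
    Finset.sum_le_sum fun i _ => by
      have := Real.add_one_le_exp (graphEigs G i); linarith
  have hsum1 : ∑ i ∈ Finset.univ.erase j, (1 + graphEigs G i) =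
      (n : ℝ) - 1 - graphEigs G j := by
    rw [Finset.sum_add_distrib, Finset.sum_const, hsumerase, nsmul_eq_mul, hcardR]; ring
  have hmain : Real.exp t - t + (n : ℝ) - 1 ≤ estradaIndex G := by
    have h2 := exp_sub_mono ht0 hray
    rw [hsplit]
    have := hstep1
    rw [hsum1] at this
    linarith
  constructor
  · rw [ge_iff_le]
    linarith
  constructor
  · intro heq
    by_contra hne
    -- G ≠ ⊥, so m ≥ 1, t > 0, λ j > 0, and some eigenvalue ≠ j is negative
    have hm : 0 < G.edgeFinset.card :=
      Finset.card_pos.mpr (SimpleGraph.edgeFinset_nonempty.mpr hne)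
    have htpos : 0 < t := by positivity
    have hjpos : 0 < graphEigs G j := lt_of_lt_of_le htpos hray
    have hneg : ∃ i ∈ Finset.univ.erase j, graphEigs G i < 0 := by
      by_contra hc
      push_neg at hc
      have : (0:ℝ) ≤ ∑ i ∈ Finset.univ.erase j, graphEigs G i :=
        Finset.sum_nonneg hc
      rw [hsumerase] at this
      linarith
    obtain ⟨i0, hi0mem, hi0⟩ := hneg
    have hstrict : ∑ i ∈ Finset.univ.erase j, (1 + graphEigs G i) <
        ∑ i ∈ Finset.univ.erase j, Real.exp (graphEigs G i) := by
      apply Finset.sum_lt_sum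
      · intro i _
        have := Real.add_one_le_exp (graphEigs G i); linarith
      · refine ⟨i0, hi0mem, ?_⟩
        have := Real.add_one_lt_exp (ne_of_lt hi0); linarith
    have h2 := exp_sub_mono ht0 hray
    rw [hsum1] at hstrict
    rw [hsplit] at heq
    linarith
  · intro hG
    have h0 : ∀ i, graphEigs G i = 0 := graphEigs_bot G hG
    have hm0 : G.edgeFinset.card = 0 := by
      rw [Finset.card_eq_zero, SimpleGraph.edgeFinset_eq_empty]; exact hG
    have htz : t = 0 := by rw [htdef, hm0]; norm_num
    have hEE : estradaIndex G = n := by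
      rw [estradaIndex]
      simp only [h0, Real.exp_zero]
      rw [Finset.sum_const, Finset.card_univ, Fintype.card_fin, nsmul_eq_mul, mul_one]
    rw [hEE, htz]
    norm_num
end

section
/- Let G be a bipartite simple graph on n ≥ 2 vertices with largest adjacency eigenvalue λ₁. Then EE(G) ≥ 2·cosh(λ₁) + n − 2. -/
open Matrix Finset

variable {m : ℕ}

lemma sum_eigs_eq_trace {A : Matrix (Fin m) (Fin m) ℝ} (hA : A.IsHermitian) :
    ∑ i, hA.eigenvalues i = A.trace := by
  conv_rhs => rw [hA.spectral_theorem]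
  rw [Unitary.conjStarAlgAut_apply, Matrix.trace_mul_cycle, Unitary.coe_star_mul_self, Matrix.one_mul, Matrix.trace_diagonal]
  simp

lemma exists_eigenvalue_eq {A : Matrix (Fin m) (Fin m) ℝ} (hA : A.IsHermitian)
    {w : Fin m → ℝ} (hw : w ≠ 0) {μ : ℝ} (hAw : A *ᵥ w = μ • w) :
    ∃ j, hA.eigenvalues j = μ := by
  by_contra h
  push_neg at h
  apply hw
  have key : ∀ j, (⇑(hA.eigenvectorBasis j)) ⬝ᵥ w = 0 := by
    intro j
    have h1 : (⇑(hA.eigenvectorBasis j)) ⬝ᵥ (A *ᵥ w) = hA.eigenvalues j * ((⇑(hA.eigenvectorBasis j)) ⬝ᵥ w) := by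
      have hT : Aᵀ = A := (Matrix.conjTranspose_eq_transpose_of_trivial A).symm.trans hA
      rw [Matrix.dotProduct_mulVec, ← Matrix.mulVec_transpose, hT,
        hA.mulVec_eigenvectorBasis, smul_dotProduct, smul_eq_mul]
    have h2 : (⇑(hA.eigenvectorBasis j)) ⬝ᵥ (A *ᵥ w) = μ * ((⇑(hA.eigenvectorBasis j)) ⬝ᵥ w) := by
      rw [hAw, dotProduct_smul, smul_eq_mul]
    have hne := h j
    have heq := h1.symm.trans h2
    have hz : (hA.eigenvalues j - μ) * ((⇑(hA.eigenvectorBasis j)) ⬝ᵥ w) = 0 := by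
      rw [sub_mul, heq, sub_self]
    rcases mul_eq_zero.1 hz with h' | h'
    · exact absurd (sub_eq_zero.1 h') hne
    · exact h'
  have hW : ((WithLp.equiv 2 (Fin m → ℝ)).symm w) = 0 := by
    apply (hA.eigenvectorBasis).repr.injective
    simp only [map_zero]
    ext j
    rw [OrthonormalBasis.repr_apply_apply]
    simpa [PiLp.inner_apply, dotProduct, mul_comm] using key j
  simpa using congrArg (WithLp.equiv 2 (Fin m → ℝ)) hW

/-- eigenvector basis vectors, as plain functions, are nonzero -/
lemma eigvec_ne_zero {A : Matrix (Fin m) (Fin m) ℝ} (hA : A.IsHermitian) (j : Fin m) :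
    (⇑(hA.eigenvectorBasis j) : Fin m → ℝ) ≠ 0 := by
  intro h
  have h0 : hA.eigenvectorBasis j = 0 := by
    apply (WithLp.equiv 2 (Fin m → ℝ)).injective
    simpa using h
  have := hA.eigenvectorBasis.orthonormal.1 j
  rw [h0] at this
  simp at this

/-- bipartite spectral symmetry: `-μ` is an eigenvalue whenever `μ` is -/
lemma neg_eig_of_bipartite {G : SimpleGraph (Fin m)} [DecidableRel G.Adj]
    (hbip : G.Colorable 2) {hA : (G.adjMatrix ℝ).IsHermitian} (i : Fin m) :
    ∃ j, hA.eigenvalues j = -(hA.eigenvalues i) := by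
  obtain ⟨c⟩ := hbip
  set d : Fin m → ℝ := fun k => if c k = 0 then 1 else -1 with hd
  have hd1 : ∀ k, d k = 1 ∨ d k = -1 := by
    intro k; by_cases h : c k = 0 <;> simp [hd, h]
  have hadj : ∀ {a b : Fin m}, G.Adj a b → d b = -(d a) := by
    intro a b hab
    have hvv := c.valid hab
    have htwo : ∀ x : Fin 2, x = 0 ∨ x = 1 := by decide
    rcases htwo (c a) with h1 | h1 <;> rcases htwo (c b) with h2 | h2
    · exact absurd (h1.trans h2.symm) hvv
    · rw [hd]; simp [h1, h2]
    · rw [hd]; simp [h1, h2]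
    · exact absurd (h1.trans h2.symm) hvv
  set v : Fin m → ℝ := ⇑(hA.eigenvectorBasis i) with hv
  set μ := hA.eigenvalues i
  have hAv : G.adjMatrix ℝ *ᵥ v = μ • v := hA.mulVec_eigenvectorBasis i
  set w : Fin m → ℝ := fun k => d k * v k with hw
  have hAw : G.adjMatrix ℝ *ᵥ w = (-μ) • w := by
    funext a
    have step : ∀ b, G.adjMatrix ℝ a b * w b = -(d a) * (G.adjMatrix ℝ a b * v b) := by
      intro b
      by_cases hab : G.Adj a b
      · have hb := hadj hab
        show G.adjMatrix ℝ a b * (d b * v b) = -d a * (G.adjMatrix ℝ a b * v b)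
        rw [hb]; ring
      · simp [SimpleGraph.adjMatrix_apply, if_neg hab]
    have : (G.adjMatrix ℝ *ᵥ w) a = -(d a) * (G.adjMatrix ℝ *ᵥ v) a := by
      simp only [Matrix.mulVec, dotProduct]
      rw [Finset.mul_sum]
      exact Finset.sum_congr rfl fun b _ => step b
    rw [this, hAv]
    have hdd : d a * d a = 1 := by rcases hd1 a with h | h <;> rw [h] <;> norm_num
    simp only [Pi.smul_apply, smul_eq_mul, hw]
    ring
  have hwne : w ≠ 0 := by
    intro h0
    apply eigvec_ne_zero hA i
    funext k
    have h1 : d k * v k = 0 := congrFun h0 k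
    have h2 : v k = 0 := by rcases hd1 k with h | h <;> rw [h] at h1 <;> linarith
    exact h2
  exact exists_eigenvalue_eq hA hwne hAw

/-- For a bipartite simple graph `G` on `n ≥ 2` vertices with largest
adjacency eigenvalue `λ₁`, one has `EE(G) ≥ 2·cosh(λ₁) + n − 2`. -/
theorem estrada_ge_two_cosh_of_bipartite {n : ℕ} (hn : 2 ≤ n)
    (G : SimpleGraph (Fin n)) [DecidableRel G.Adj] (hbip : G.Colorable 2)
    (lam1 : ℝ) (hlam : IsGreatest (Set.range (graphEigs G)) lam1) :
    estradaIndex G ≥ 2 * Real.cosh lam1 + ((n : ℝ) - 2) := by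
  obtain ⟨i₀, hi₀⟩ := hlam.1
  have hub : ∀ i, graphEigs G i ≤ lam1 := fun i => hlam.2 ⟨i, rfl⟩
  have hnpos : (0 : ℝ) < n := by
    have : (2 : ℝ) ≤ n := by exact_mod_cast hn
    linarith
  have hsum : ∑ i, graphEigs G i = 0 := by
    have h := sum_eigs_eq_trace (adjHerm G)
    rw [SimpleGraph.trace_adjMatrix] at h
    exact h
  have hlam0 : 0 ≤ lam1 := by
    by_contra h
    push_neg at h
    have h1 : ∑ i, graphEigs G i ≤ ∑ _i : Fin n, lam1 :=
      Finset.sum_le_sum fun i _ => hub i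
    have h2 : ∑ _i : Fin n, lam1 = (n : ℝ) * lam1 := by
      simp [Finset.sum_const, nsmul_eq_mul]
    have h3 : (n : ℝ) * lam1 < 0 := mul_neg_of_pos_of_neg hnpos h
    rw [hsum, h2] at h1
    linarith
  rcases eq_or_lt_of_le hlam0 with h0 | hpos
  · -- lam1 = 0 : all eigenvalues are 0
    have hall : ∀ i, graphEigs G i = 0 := by
      by_contra h
      push_neg at h
      obtain ⟨k, hk⟩ := h
      have hklt : graphEigs G k < 0 := lt_of_le_of_ne (h0 ▸ hub k) hk
      have : ∑ i, graphEigs G i < ∑ _i : Fin n, (0 : ℝ) :=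
        Finset.sum_lt_sum (fun i _ => h0 ▸ hub i) ⟨k, Finset.mem_univ k, hklt⟩
      rw [hsum] at this
      simp at this
    have hEE : estradaIndex G = (n : ℝ) := by
      rw [estradaIndex]
      simp [hall]
    rw [hEE, ← h0, Real.cosh_zero]
    linarith
  · -- lam1 > 0
    obtain ⟨j, hj⟩ := neg_eig_of_bipartite (hA := adjHerm G) hbip i₀
    have hj' : graphEigs G j = -lam1 := by rw [← hi₀]; exact hj
    have hne : j ≠ i₀ := by
      intro h
      rw [h, hi₀] at hj'
      linarith
    have hjmem : j ∈ Finset.univ.erase i₀ :=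
      Finset.mem_erase.2 ⟨hne, Finset.mem_univ j⟩
    set s : Finset (Fin n) := (Finset.univ.erase i₀).erase j with hs
    have hsplit : ∀ f : Fin n → ℝ, ∑ i, f i = f i₀ + (f j + ∑ i ∈ s, f i) := by
      intro f
      rw [← Finset.add_sum_erase _ f (Finset.mem_univ i₀),
        ← Finset.add_sum_erase _ f hjmem]
    have hcard : s.card = n - 2 := by
      rw [hs, Finset.card_erase_of_mem hjmem, Finset.card_erase_of_mem (Finset.mem_univ i₀),
        Finset.card_univ, Fintype.card_fin]
      omega
    have hcardR : (s.card : ℝ) = (n : ℝ) - 2 := by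
      rw [hcard]
      have := Nat.cast_sub hn (R := ℝ)
      rw [this]
      norm_num
    have hsumrest : ∑ i ∈ s, graphEigs G i = 0 := by
      have h := hsplit (graphEigs G)
      rw [hsum, hi₀, hj'] at h
      linarith
    have hrest : (n : ℝ) - 2 ≤ ∑ i ∈ s, Real.exp (graphEigs G i) := by
      have h1 : ∑ i ∈ s, (graphEigs G i + 1) ≤ ∑ i ∈ s, Real.exp (graphEigs G i) :=
        Finset.sum_le_sum fun i _ => Real.add_one_le_exp _
      have h2 : ∑ i ∈ s, (graphEigs G i + 1) = (n : ℝ) - 2 := by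
        rw [Finset.sum_add_distrib, hsumrest, Finset.sum_const, nsmul_eq_mul, mul_one,
          hcardR, zero_add]
      linarith
    have hEE : estradaIndex G
        = Real.exp (graphEigs G i₀) + (Real.exp (graphEigs G j)
          + ∑ i ∈ s, Real.exp (graphEigs G i)) :=
      hsplit fun i => Real.exp (graphEigs G i)
    rw [hEE, hi₀, hj', Real.cosh_eq]
    linarith
end

section
/- Let G be a connected simple graph on n ≥ 2 vertices with largest adjacency eigenvalue λ₁, and let γ^(k) = sqrt( (Σ_i d_{k+1}(i)²) / (Σ_i d_k(i)²) ) where d_k(i) is the number of walks of length k starting at vertex i. Then the sequence {γ^(k)}_{k≥0} is monotonically increasing and converges to λ₁. -/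
open Matrix Finset


/-- `dwalk G k i` is the number of walks of length `k` starting at `i`,
computed as `(A^k 𝟙)_i`. -/
noncomputable def dwalk {n : ℕ} (G : SimpleGraph (Fin n)) [DecidableRel G.Adj]
    (k : ℕ) (i : Fin n) : ℝ :=
  ((G.adjMatrix ℝ) ^ k).mulVec (fun _ => 1) i

/-- The sequence `γ^(k) = sqrt((∑ i, d_{k+1}(i)²)/(∑ i, d_k(i)²))`. -/
noncomputable def gammaSeq {n : ℕ} (G : SimpleGraph (Fin n)) [DecidableRel G.Adj]
    (k : ℕ) : ℝ :=
  Real.sqrt ((∑ i, dwalk G (k + 1) i ^ 2) / (∑ i, dwalk G k i ^ 2))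



section Aux
variable {n : ℕ} (G : SimpleGraph (Fin n)) [DecidableRel G.Adj]

private lemma adjSymmDot (x y : Fin n → ℝ) :
    ((G.adjMatrix ℝ) *ᵥ x) ⬝ᵥ y = x ⬝ᵥ ((G.adjMatrix ℝ) *ᵥ y) := by
  simp only [dotProduct, Matrix.mulVec, Finset.sum_mul, Finset.mul_sum]
  rw [Finset.sum_comm]
  apply Finset.sum_congr rfl; intro i _; apply Finset.sum_congr rfl; intro j _
  have h : G.Adj j i ↔ G.Adj i j := SimpleGraph.adj_comm G j i
  simp only [SimpleGraph.adjMatrix_apply]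
  by_cases hij : G.Adj i j
  · simp only [hij, h.2 hij, if_true]; ring
  · simp only [hij, fun hji => hij (h.1 hji), if_false]
    have : ¬ G.Adj j i := fun hji => hij (h.1 hji)
    simp [this]

private lemma powMulVec_succ (k : ℕ) (x : Fin n → ℝ) :
    ((G.adjMatrix ℝ) ^ (k+1)) *ᵥ x = (G.adjMatrix ℝ) *ᵥ (((G.adjMatrix ℝ) ^ k) *ᵥ x) := by
  rw [pow_succ', Matrix.mulVec_mulVec]

/-- shift: ⟨A^a x, A^b x⟩ = ⟨x, A^(a+b) x⟩ -/
private lemma dotA (a b : ℕ) (x : Fin n → ℝ) :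
    (((G.adjMatrix ℝ) ^ a) *ᵥ x) ⬝ᵥ (((G.adjMatrix ℝ) ^ b) *ᵥ x)
      = x ⬝ᵥ (((G.adjMatrix ℝ) ^ (a+b)) *ᵥ x) := by
  induction a generalizing b with
  | zero => simp [Matrix.one_mulVec]
  | succ a ih =>
      rw [powMulVec_succ, adjSymmDot, ← powMulVec_succ]
      rw [ih (b+1), show a + (b+1) = a + 1 + b from by ring]

end Aux

section Aux2
variable {n : ℕ} {G : SimpleGraph (Fin n)} [DecidableRel G.Adj]

private lemma adjPow_nonneg (k : ℕ) (i j : Fin n) : 0 ≤ ((G.adjMatrix ℝ) ^ k) i j := by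
  induction k generalizing i j with
  | zero => by_cases h : i = j <;> simp [h, Matrix.one_apply]
  | succ k ih =>
      rw [pow_succ, Matrix.mul_apply]
      exact Finset.sum_nonneg fun l _ => mul_nonneg (ih i l) (by by_cases h : G.Adj l j <;> simp [h])

private lemma exists_adj (hn : 2 ≤ n) (hconn : G.Connected) (i : Fin n) : ∃ j, G.Adj i j := by
  obtain ⟨j, hj⟩ := Fintype.exists_ne_of_one_lt_card (by simp; omega) i
  obtain ⟨p⟩ := hconn.preconnected i j
  cases p with
  | nil => exact absurd rfl hj.symm
  | cons h _ => exact ⟨_, h⟩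

private lemma one_le_dwalk (hn : 2 ≤ n) (hconn : G.Connected) (k : ℕ) (i : Fin n) :
    1 ≤ dwalk G k i := by
  induction k generalizing i with
  | zero => simp [dwalk, Matrix.one_mulVec]
  | succ k ih =>
      obtain ⟨j, hj⟩ := exists_adj hn hconn i
      have hd : dwalk G (k+1) i = ∑ l, (G.adjMatrix ℝ) i l * dwalk G k l := by
        show (((G.adjMatrix ℝ) ^ (k+1)) *ᵥ _) i = _
        rw [powMulVec_succ]; rfl
      rw [hd]
      have h1 : (1:ℝ) ≤ (G.adjMatrix ℝ) i j * dwalk G k j := by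
        simpa [hj] using ih j
      refine le_trans h1 (Finset.single_le_sum
        (fun l _ => mul_nonneg (by by_cases h : G.Adj i l <;> simp [h])
          (le_trans zero_le_one (ih l))) (Finset.mem_univ j))

private lemma sum_sq_eq_dot (x : Fin n → ℝ) : ∑ i, x i ^ 2 = x ⬝ᵥ x := by
  simp [dotProduct, sq]

private lemma cs (x y : Fin n → ℝ) : (x ⬝ᵥ y) ^ 2 ≤ (x ⬝ᵥ x) * (y ⬝ᵥ y) := by
  simpa [dotProduct, ← sq] using Finset.sum_mul_sq_le_sq_mul_sq Finset.univ x y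

private lemma adj_nonneg (p q : Fin n) : (0:ℝ) ≤ G.adjMatrix ℝ p q := by
  by_cases h : G.Adj p q <;> simp [h]

private lemma parseval (x y : Fin n → ℝ) :
    x ⬝ᵥ y = ∑ j, (x ⬝ᵥ ⇑((adjHerm G).eigenvectorBasis j))
      * (⇑((adjHerm G).eigenvectorBasis j) ⬝ᵥ y) := by
  have h := OrthonormalBasis.sum_inner_mul_inner (adjHerm G).eigenvectorBasis
      (WithLp.toLp 2 x) (WithLp.toLp 2 y)
  simp only [PiLp.inner_apply, RCLike.inner_apply, starRingEnd_apply, star_trivial, PiLp.toLp_apply] at h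
  simp only [dotProduct]
  simpa only [mul_comm] using h.symm

private lemma evec_dot_pow (j : Fin n) (k : ℕ) (x : Fin n → ℝ) :
    ⇑((adjHerm G).eigenvectorBasis j) ⬝ᵥ (((G.adjMatrix ℝ) ^ k) *ᵥ x)
      = (graphEigs G j) ^ k * (⇑((adjHerm G).eigenvectorBasis j) ⬝ᵥ x) := by
  induction k generalizing x with
  | zero => simp [Matrix.one_mulVec]
  | succ k ih =>
      rw [powMulVec_succ, ← adjSymmDot, Matrix.IsHermitian.mulVec_eigenvectorBasis,
        smul_dotProduct, ih x, smul_eq_mul]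
      show graphEigs G j * (graphEigs G j ^ k * _) = _
      rw [pow_succ]; ring

private lemma dot_mulVec_expand (x y : Fin n → ℝ) :
    x ⬝ᵥ ((G.adjMatrix ℝ) *ᵥ y) = ∑ p, ∑ q, (G.adjMatrix ℝ) p q * x p * y q := by
  simp only [dotProduct, Matrix.mulVec, Finset.mul_sum]
  exact Finset.sum_congr rfl fun p _ => Finset.sum_congr rfl fun q _ => by ring

private lemma rayleigh_s8 {lam1 : ℝ} (hlam : IsGreatest (Set.range (graphEigs G)) lam1)
    (x : Fin n → ℝ) : x ⬝ᵥ ((G.adjMatrix ℝ) *ᵥ x) ≤ lam1 * (x ⬝ᵥ x) := by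
  have h1 := parseval (G := G) x ((G.adjMatrix ℝ) *ᵥ x)
  have h2 : ∀ j : Fin n, ⇑((adjHerm G).eigenvectorBasis j) ⬝ᵥ ((G.adjMatrix ℝ) *ᵥ x)
      = graphEigs G j * (⇑((adjHerm G).eigenvectorBasis j) ⬝ᵥ x) := by
    intro j
    simpa [pow_one] using evec_dot_pow j 1 x
  rw [h1]
  have h3 : x ⬝ᵥ x
      = ∑ j, (⇑((adjHerm G).eigenvectorBasis j) ⬝ᵥ x) ^ 2 := by
    rw [parseval (G := G) x x]
    exact Finset.sum_congr rfl fun j _ => by rw [dotProduct_comm, sq]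
  rw [h3, Finset.mul_sum]
  refine Finset.sum_le_sum fun j _ => ?_
  rw [h2 j, dotProduct_comm]
  have := hlam.2 ⟨j, rfl⟩
  nlinarith [sq_nonneg (⇑((adjHerm G).eigenvectorBasis j) ⬝ᵥ x)]

private lemma evec_norm_one (j : Fin n) :
    ⇑((adjHerm G).eigenvectorBasis j) ⬝ᵥ ⇑((adjHerm G).eigenvectorBasis j) = 1 := by
  have h := orthonormal_iff_ite.mp (adjHerm G).eigenvectorBasis.orthonormal j j
  simp only [PiLp.inner_apply, RCLike.inner_apply, starRingEnd_apply, star_trivial,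
    if_pos rfl] at h
  simp only [dotProduct]
  exact h

private lemma abs_eig_le {lam1 : ℝ} (hlam : IsGreatest (Set.range (graphEigs G)) lam1)
    (j : Fin n) : |graphEigs G j| ≤ lam1 := by
  set v : Fin n → ℝ := ⇑((adjHerm G).eigenvectorBasis j) with hv
  set w : Fin n → ℝ := fun p => |v p| with hw
  have hvv : v ⬝ᵥ v = 1 := evec_norm_one j
  have hww : w ⬝ᵥ w = 1 := by
    rw [← hvv]; simp [dotProduct, hw, abs_mul_abs_self]
  have heig : graphEigs G j = v ⬝ᵥ ((G.adjMatrix ℝ) *ᵥ v) := by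
    have h5 := evec_dot_pow (G := G) j 1 v
    rw [pow_one, pow_one, ← hv, hvv, mul_one] at h5
    exact h5.symm
  have hneg : -(v ⬝ᵥ ((G.adjMatrix ℝ) *ᵥ v)) ≤ w ⬝ᵥ ((G.adjMatrix ℝ) *ᵥ w) := by
    rw [dot_mulVec_expand, dot_mulVec_expand, ← Finset.sum_neg_distrib]
    refine Finset.sum_le_sum fun p _ => ?_
    rw [← Finset.sum_neg_distrib]
    refine Finset.sum_le_sum fun q _ => ?_
    calc -(G.adjMatrix ℝ p q * v p * v q) ≤ |G.adjMatrix ℝ p q * v p * v q| := neg_le_abs _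
      _ = G.adjMatrix ℝ p q * w p * w q := by
          rw [abs_mul, abs_mul, abs_of_nonneg (adj_nonneg p q)]
  have hray := rayleigh_s8 hlam w
  rw [hww, mul_one] at hray
  exact abs_le.2 ⟨by rw [heig] at *; linarith, hlam.2 ⟨j, rfl⟩⟩


private lemma S_upper {lam1 : ℝ} (hlam : IsGreatest (Set.range (graphEigs G)) lam1)
    (k : ℕ) : ∑ i, dwalk G k i ^ 2 ≤ (n:ℝ) * lam1 ^ (2*k) := by
  have hdw : dwalk G k = ((G.adjMatrix ℝ) ^ k) *ᵥ (fun _ => 1) := rfl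
  rw [sum_sq_eq_dot, hdw,
    parseval (G := G) (((G.adjMatrix ℝ) ^ k) *ᵥ (fun _ => 1)) (((G.adjMatrix ℝ) ^ k) *ᵥ (fun _ => 1))]
  have key : ∀ j : Fin n,
      ((((G.adjMatrix ℝ) ^ k) *ᵥ (fun _ => 1)) ⬝ᵥ ⇑((adjHerm G).eigenvectorBasis j))
        * (⇑((adjHerm G).eigenvectorBasis j) ⬝ᵥ (((G.adjMatrix ℝ) ^ k) *ᵥ (fun _ => 1)))
      = (graphEigs G j) ^ (2*k)
        * (⇑((adjHerm G).eigenvectorBasis j) ⬝ᵥ (fun _ => (1:ℝ))) ^ 2 := by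
    intro j
    rw [dotProduct_comm, evec_dot_pow, two_mul, pow_add]; ring
  rw [Finset.sum_congr rfl fun j _ => key j]
  have hsum : ∑ j : Fin n, (⇑((adjHerm G).eigenvectorBasis j) ⬝ᵥ (fun _ => (1:ℝ))) ^ 2
      = (n:ℝ) := by
    have hp := parseval (G := G) (fun _ => (1:ℝ)) (fun _ => (1:ℝ))
    have : ((fun _ => (1:ℝ)) : Fin n → ℝ) ⬝ᵥ (fun _ => 1) = (n:ℝ) := by
      simp [dotProduct]
    rw [this] at hp
    rw [hp]
    refine Finset.sum_congr rfl fun j _ => ?_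
    rw [sq]
    nth_rewrite 1 [dotProduct_comm]
    rfl
  calc ∑ j : Fin n, (graphEigs G j) ^ (2*k)
          * (⇑((adjHerm G).eigenvectorBasis j) ⬝ᵥ (fun _ => (1:ℝ))) ^ 2
      ≤ ∑ j : Fin n, lam1 ^ (2*k)
          * (⇑((adjHerm G).eigenvectorBasis j) ⬝ᵥ (fun _ => (1:ℝ))) ^ 2 := by
        refine Finset.sum_le_sum fun j _ => ?_
        have habs := abs_le.1 (abs_eig_le hlam j)
        have h1 : (graphEigs G j) ^ (2*k) ≤ lam1 ^ (2*k) := by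
          rw [pow_mul, pow_mul]
          exact pow_le_pow_left₀ (sq_nonneg _) (sq_le_sq' habs.1 habs.2) k
        exact mul_le_mul_of_nonneg_right h1 (sq_nonneg _)
    _ = (n:ℝ) * lam1 ^ (2*k) := by rw [← Finset.mul_sum, hsum]; ring

private lemma one_le_lam1 (hn : 2 ≤ n) (hconn : G.Connected) {lam1 : ℝ}
    (hlam : IsGreatest (Set.range (graphEigs G)) lam1) : 1 ≤ lam1 := by
  have h1 := rayleigh_s8 hlam (fun _ => 1)
  have h2 : ((fun _ => (1:ℝ)) : Fin n → ℝ) ⬝ᵥ ((G.adjMatrix ℝ) *ᵥ fun _ => 1)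
      = ∑ i, dwalk G 1 i := by
    simp only [dotProduct, one_mul]
    exact Finset.sum_congr rfl fun i _ => by rw [dwalk, pow_one]
  have h3 : (n:ℝ) ≤ ∑ i, dwalk G 1 i := by
    calc (n:ℝ) = ∑ _i : Fin n, (1:ℝ) := by simp
      _ ≤ _ := Finset.sum_le_sum fun i _ => one_le_dwalk hn hconn 1 i
  have h4 : ((fun _ => (1:ℝ)) : Fin n → ℝ) ⬝ᵥ (fun _ => 1) = (n:ℝ) := by
    simp [dotProduct]
  rw [h2, h4] at h1
  have hn0 : (0:ℝ) < n := by
    have : (0:ℕ) < n := by omega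
    exact_mod_cast this
  nlinarith

private lemma S_lower (hn : 2 ≤ n) (hconn : G.Connected) {lam1 : ℝ}
    (hlam : IsGreatest (Set.range (graphEigs G)) lam1) (k : ℕ) :
    lam1 ^ (2*k) ≤ ∑ i, dwalk G k i ^ 2 := by
  obtain ⟨j0, hj0⟩ := hlam.1
  have hl1 : 1 ≤ lam1 := one_le_lam1 hn hconn hlam
  set A := G.adjMatrix ℝ with hA
  set v : Fin n → ℝ := ⇑((adjHerm G).eigenvectorBasis j0) with hv
  set w : Fin n → ℝ := fun p => |v p| with hw
  have hvv : v ⬝ᵥ v = 1 := evec_norm_one j0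
  have hww : w ⬝ᵥ w = 1 := by
    rw [← hvv]; simp [dotProduct, hw, abs_mul_abs_self]
  have heig : graphEigs G j0 = v ⬝ᵥ (A *ᵥ v) := by
    have h5 := evec_dot_pow (G := G) j0 1 v
    rw [pow_one, pow_one, ← hv, hvv, mul_one] at h5
    exact h5.symm
  have hwge : lam1 ≤ w ⬝ᵥ (A *ᵥ w) := by
    rw [← hj0, heig, dot_mulVec_expand, dot_mulVec_expand]
    refine Finset.sum_le_sum fun p _ => Finset.sum_le_sum fun q _ => ?_
    calc A p q * v p * v q ≤ |A p q * v p * v q| := le_abs_self _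
      _ = A p q * w p * w q := by
          rw [abs_mul, abs_mul, abs_of_nonneg (adj_nonneg p q)]
  have hwle1 : ∀ p, w p ≤ 1 := by
    intro p
    have h6 : v p * v p ≤ 1 := by
      rw [← hvv]
      exact Finset.single_le_sum (f := fun q => v q * v q)
        (fun q _ => mul_self_nonneg _) (Finset.mem_univ p)
    nlinarith [abs_nonneg (v p), abs_mul_abs_self (v p)]
  have hw0 : ∀ p, 0 ≤ w p := fun p => abs_nonneg _
  set Q : ℕ → ℝ := fun a => (A^a *ᵥ w) ⬝ᵥ (A^a *ᵥ w) with hQ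
  have hQ0 : Q 0 = 1 := by simp [hQ, Matrix.one_mulVec, hww]
  have hQshift : ∀ a, Q (a+1) = (A^a *ᵥ w) ⬝ᵥ (A^(a+2) *ᵥ w) := by
    intro a
    rw [hQ]
    show (A^(a+1) *ᵥ w) ⬝ᵥ (A^(a+1) *ᵥ w) = _
    rw [dotA, dotA, show a+1+(a+1) = a+(a+2) from by ring]
  have hQ1 : lam1^2 ≤ Q 1 := by
    have hcs := cs w (A *ᵥ w)
    have h7 : lam1^2 ≤ (w ⬝ᵥ (A *ᵥ w))^2 :=
      pow_le_pow_left₀ (by linarith) hwge 2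
    have h8 : Q 1 = (A *ᵥ w) ⬝ᵥ (A *ᵥ w) := by rw [hQ]; simp [pow_one]
    rw [hww, one_mul] at hcs
    rw [h8]; linarith
  have hQmain : ∀ a, lam1^2 * Q a ≤ Q (a+1) ∧ lam1^(2*a) ≤ Q a := by
    intro a
    induction a with
    | zero => exact ⟨by rw [hQ0, mul_one]; exact hQ1, by rw [Nat.mul_zero, pow_zero, hQ0]⟩
    | succ a ih =>
        obtain ⟨h1, h2⟩ := ih
        have hQa_pos : 0 < Q a := lt_of_lt_of_le (pow_pos (by linarith) _) h2
        have hQa1 : lam1^(2*(a+1)) ≤ Q (a+1) := by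
          rw [show 2*(a+1) = 2 + 2*a from by ring, pow_add]
          calc lam1^2 * lam1^(2*a) ≤ lam1^2 * Q a :=
                mul_le_mul_of_nonneg_left h2 (sq_nonneg _)
            _ ≤ Q (a+1) := h1
        have hQa1_pos : 0 < Q (a+1) := lt_of_lt_of_le (pow_pos (by linarith) _) hQa1
        have hcs := cs (A^a *ᵥ w) (A^(a+2) *ᵥ w)
        rw [← hQshift a] at hcs
        refine ⟨?_, hQa1⟩
        -- hcs : Q(a+1)^2 ≤ Q a * Q (a+2)  (with dots for Q a, Q (a+2))
        have hca : (A^a *ᵥ w) ⬝ᵥ (A^a *ᵥ w) = Q a := rfl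
        have hcb : (A^(a+2) *ᵥ w) ⬝ᵥ (A^(a+2) *ᵥ w) = Q (a+2) := rfl
        rw [hca, hcb] at hcs
        have h9 : lam1^2 * Q a * Q (a+1) ≤ Q (a+1) * Q (a+1) :=
          mul_le_mul_of_nonneg_right h1 hQa1_pos.le
        have h10 : Q a * (lam1^2 * Q (a+1)) ≤ Q a * Q (a+2) := by nlinarith
        exact le_of_mul_le_mul_left h10 hQa_pos
  have hSQ : Q k ≤ ∑ i, dwalk G k i ^ 2 := by
    rw [sum_sq_eq_dot, hQ]
    simp only [dotProduct]
    refine Finset.sum_le_sum fun i _ => ?_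
    have he0 : 0 ≤ (A^k *ᵥ w) i := by
      show (0:ℝ) ≤ ∑ q, (A^k) i q * w q
      exact Finset.sum_nonneg fun q _ => mul_nonneg (hA ▸ adjPow_nonneg (G:=G) k i q) (hw0 q)
    have hed : (A^k *ᵥ w) i ≤ dwalk G k i := by
      show ∑ q, (A^k) i q * w q ≤ dwalk G k i
      have : dwalk G k i = ∑ q, (A^k) i q * 1 := by
        rw [dwalk]; simp [Matrix.mulVec, dotProduct, hA]
      rw [this]
      exact Finset.sum_le_sum fun q _ =>
        mul_le_mul_of_nonneg_left (hwle1 q) (adjPow_nonneg k i q)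
    nlinarith
  exact le_trans (hQmain k).2 hSQ

end Aux2

private lemma le_of_pow_ratio {a b c C : ℝ} (ha : 0 ≤ a) (hb : 0 < b) (hc : 0 < c)
    (h : ∀ k : ℕ, c * a ^ k ≤ C * b ^ k) : a ≤ b := by
  by_contra hab
  push_neg at hab
  have h1 : (1:ℝ) < a / b := (one_lt_div hb).2 hab
  have h2 : ∀ k : ℕ, (a/b)^k ≤ C/c := by
    intro k
    rw [div_pow, div_le_div_iff₀ (pow_pos hb k) hc]
    nlinarith [h k]
  obtain ⟨k, hk⟩ := ((tendsto_pow_atTop_atTop_of_one_lt h1).eventually_gt_atTop (C/c)).exists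
  exact absurd (h2 k) (not_le.2 hk)


/-- For a connected simple graph on `n ≥ 2` vertices, the sequence
`{γ^(k)}` is monotonically increasing and converges to `λ₁`. -/
theorem gammaSeq_monotone_tendsto {n : ℕ} (hn : 2 ≤ n)
    (G : SimpleGraph (Fin n)) [DecidableRel G.Adj] (hconn : G.Connected)
    (lam1 : ℝ) (hlam : IsGreatest (Set.range (graphEigs G)) lam1) :
    Monotone (gammaSeq G) ∧
      Filter.Tendsto (gammaSeq G) Filter.atTop (nhds lam1) := by
  have hl1 : 1 ≤ lam1 := one_le_lam1 hn hconn hlam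
  set A := G.adjMatrix ℝ with hA
  set S : ℕ → ℝ := fun k => ∑ i, dwalk G k i ^ 2 with hS
  have hne : Nonempty (Fin n) := ⟨⟨0, by omega⟩⟩
  have hSpos : ∀ k, 0 < S k := fun k =>
    Finset.sum_pos (fun i _ => by nlinarith [one_le_dwalk hn hconn k i])
      Finset.univ_nonempty
  have hgamdef : ∀ k, gammaSeq G k = Real.sqrt (S (k+1) / S k) := fun k => rfl
  have hgam0 : ∀ k, 0 ≤ gammaSeq G k := fun k => by
    rw [hgamdef]; exact Real.sqrt_nonneg _
  have hgam : ∀ k, gammaSeq G k ^ 2 = S (k+1) / S k := fun k => by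
    rw [hgamdef]; exact Real.sq_sqrt (div_nonneg (hSpos _).le (hSpos _).le)
  have hSrec : ∀ k, S (k+1) = gammaSeq G k ^ 2 * S k := fun k => by
    rw [hgam k, div_mul_cancel₀ _ (hSpos k).ne']
  have hSself : ∀ k, S k = ((A^k) *ᵥ (fun _ => 1)) ⬝ᵥ ((A^k) *ᵥ (fun _ => 1)) := fun k => by
    rw [hS]; exact sum_sq_eq_dot (dwalk G k)
  have hmid : ∀ k, S (k+1) = ((A^k) *ᵥ (fun _ => 1)) ⬝ᵥ ((A^(k+2)) *ᵥ (fun _ => 1)) := by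
    intro k
    rw [hSself (k+1), dotA, dotA, show k+1+(k+1) = k+(k+2) from by ring]
  have hkey : ∀ k, S (k+1) ^ 2 ≤ S k * S (k+2) := by
    intro k
    have hcs := cs ((A^k) *ᵥ (fun _ => (1:ℝ))) ((A^(k+2)) *ᵥ (fun _ => 1))
    rw [← hmid k, ← hSself k, ← hSself (k+2)] at hcs
    exact hcs
  have hmono : Monotone (gammaSeq G) := by
    refine monotone_nat_of_le_succ fun k => ?_
    rw [hgamdef, hgamdef]
    apply Real.sqrt_le_sqrt
    rw [div_le_div_iff₀ (hSpos k) (hSpos (k+1))]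
    nlinarith [hkey k]
  have hub : ∀ m, gammaSeq G m ≤ lam1 := by
    intro m
    have grow : ∀ k, S m * (gammaSeq G m ^ 2) ^ k ≤ S (m+k) := by
      intro k
      induction k with
      | zero => simp
      | succ k ih =>
          have h1 : gammaSeq G m ^ 2 ≤ gammaSeq G (m+k) ^ 2 :=
            pow_le_pow_left₀ (hgam0 m) (hmono (Nat.le_add_right m k)) 2
          calc S m * (gammaSeq G m ^ 2) ^ (k+1)
              = (S m * (gammaSeq G m ^ 2) ^ k) * gammaSeq G m ^ 2 := by ring
            _ ≤ S (m+k) * gammaSeq G m ^ 2 :=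
                mul_le_mul_of_nonneg_right ih (sq_nonneg _)
            _ ≤ S (m+k) * gammaSeq G (m+k) ^ 2 :=
                mul_le_mul_of_nonneg_left h1 (hSpos (m+k)).le
            _ = S (m+k+1) := by rw [hSrec (m+k)]; ring
    have hcomb : ∀ k, S m * (gammaSeq G m ^ 2) ^ k ≤ ((n:ℝ) * lam1 ^ (2*m)) * (lam1 ^ 2) ^ k := by
      intro k
      calc S m * (gammaSeq G m ^ 2) ^ k ≤ S (m+k) := grow k
        _ ≤ (n:ℝ) * lam1 ^ (2*(m+k)) := S_upper hlam (m+k)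
        _ = ((n:ℝ) * lam1 ^ (2*m)) * (lam1 ^ 2) ^ k := by
            rw [show 2*(m+k) = 2*m + 2*k from by ring, pow_add, ← pow_mul]; ring
    have := le_of_pow_ratio (sq_nonneg _) (by positivity : (0:ℝ) < lam1 ^ 2)
      (hSpos m) hcomb
    nlinarith [hgam0 m]
  have hbdd : BddAbove (Set.range (gammaSeq G)) := ⟨lam1, by rintro _ ⟨m, rfl⟩; exact hub m⟩
  have htend := tendsto_atTop_ciSup hmono hbdd
  set L := ⨆ k, gammaSeq G k with hL
  have hLub : L ≤ lam1 := ciSup_le hub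
  have hg0pos : 0 < gammaSeq G 0 := by
    rw [hgamdef]; exact Real.sqrt_pos.2 (div_pos (hSpos 1) (hSpos 0))
  have hLpos : 0 < L := lt_of_lt_of_le hg0pos (le_ciSup hbdd 0)
  have hS0 : S 0 = (n:ℝ) := by
    rw [hS]
    have : ∀ i : Fin n, dwalk G 0 i = 1 := fun i => by
      rw [dwalk, pow_zero, Matrix.one_mulVec]
    simp [this]
  have hSup : ∀ k, S k ≤ (n:ℝ) * (L ^ 2) ^ k := by
    intro k
    induction k with
    | zero => simp [hS0]
    | succ k ih =>
        rw [hSrec k]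
        have hgL : gammaSeq G k ≤ L := le_ciSup hbdd k
        have h2 : gammaSeq G k ^ 2 ≤ L ^ 2 := pow_le_pow_left₀ (hgam0 k) hgL 2
        calc gammaSeq G k ^ 2 * S k ≤ L ^ 2 * S k :=
              mul_le_mul_of_nonneg_right h2 (hSpos k).le
          _ ≤ L ^ 2 * ((n:ℝ) * (L ^ 2) ^ k) :=
              mul_le_mul_of_nonneg_left ih (sq_nonneg L)
          _ = (n:ℝ) * (L ^ 2) ^ (k+1) := by ring
  have hlamL : lam1 ≤ L := by
    have hcomb : ∀ k : ℕ, (1:ℝ) * (lam1 ^ 2) ^ k ≤ (n:ℝ) * (L ^ 2) ^ k := by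
      intro k
      rw [one_mul, ← pow_mul]
      exact le_trans (S_lower hn hconn hlam k) (hSup k)
    have := le_of_pow_ratio (sq_nonneg lam1) (by positivity : (0:ℝ) < L ^ 2)
      one_pos hcomb
    nlinarith
  have hLlam : L = lam1 := le_antisymm hLub hlamL
  exact ⟨hmono, hLlam ▸ htend⟩
end
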